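/- For every ζ ∈ ℝ with m_k ≠ −ζ and m̄_k ≠ ζ for all k, if 1 + A·Ā is invertible then det(1 + A·H_ζ·Ā·H̄_ζ) = E_{ζζ}·det(1 + A·Ā), where E_{ζζ} = 1 + 2ζ·⟨b_ζ|·G·A·|β̄_ζ⟩. -/

import Mathlib

open Matrix

noncomputable section

/-- `H_ζ = (M - ζ)(M + ζ)⁻¹` for `M = diag(m)`. -/
def Hmat {N : ℕ} (m : Fin N → ℝ) (ζ : ℝ) : Matrix (Fin N) (Fin N) ℝ :=
  (Matrix.diagonal m - ζ • 1) * (Matrix.diagonal m + ζ • 1)⁻¹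

/-- `H̄_ζ = (M̄ + ζ)(M̄ - ζ)⁻¹` for `M̄ = diag(m̄)`. -/
def Hbmat {N : ℕ} (mb : Fin N → ℝ) (ζ : ℝ) : Matrix (Fin N) (Fin N) ℝ :=
  (Matrix.diagonal mb + ζ • 1) * (Matrix.diagonal mb - ζ • 1)⁻¹

/-- The row `⟨b_ξ| = ⟨ā|(M̄ - ξ)⁻¹`. -/
def rowB {N : ℕ} (mb ab : Fin N → ℝ) (ξ : ℝ) : Fin N → ℝ :=
  Matrix.vecMul ab (Matrix.diagonal mb - ξ • 1)⁻¹

/-- The column `|β̄_η⟩ = (M + η)⁻¹|ᾱ⟩`. -/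
def colBb {N : ℕ} (m αb : Fin N → ℝ) (η : ℝ) : Fin N → ℝ :=
  Matrix.mulVec (Matrix.diagonal m + η • 1)⁻¹ αb

/-- The scalar `E_{ξη} = 1 + (ξ+η)·⟨b_ξ|·G·A·|β̄_η⟩` with `G = (1 + A·Ā)⁻¹`. -/
def Efun {N : ℕ} (m mb αb ab : Fin N → ℝ) (A Ab : Matrix (Fin N) (Fin N) ℝ)
    (ξ η : ℝ) : ℝ :=
  1 + (ξ + η) *
    (rowB mb ab ξ ⬝ᵥ
      Matrix.mulVec (((1 : Matrix (Fin N) (Fin N) ℝ) + A * Ab)⁻¹ * A) (colBb m αb η))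

theorem shifted_tau_det_formula
    {N : ℕ} (hN : 1 ≤ N) (m mb : Fin N → ℝ)
    (αv αb av ab : Fin N → ℝ)
    (A Ab : Matrix (Fin N) (Fin N) ℝ)
    (hA : Matrix.diagonal mb * A - A * Matrix.diagonal m = Matrix.vecMulVec αv av)
    (hAb : Matrix.diagonal m * Ab - Ab * Matrix.diagonal mb = Matrix.vecMulVec αb ab)
    (ζ : ℝ) (hm : ∀ k, m k ≠ -ζ) (hmb : ∀ k, mb k ≠ ζ)
    (hG : IsUnit ((1 : Matrix (Fin N) (Fin N) ℝ) + A * Ab)) :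
    ((1 : Matrix (Fin N) (Fin N) ℝ) + A * Hmat m ζ * Ab * Hbmat mb ζ).det =
      Efun m mb αb ab A Ab ζ ζ *
        ((1 : Matrix (Fin N) (Fin N) ℝ) + A * Ab).det := by
  have hd : ∀ k, m k + ζ ≠ 0 := fun k h => hm k (by linarith)
  have he : ∀ k, mb k - ζ ≠ 0 := fun k h => hmb k (by linarith)
  have hdm : Matrix.diagonal m + ζ • (1 : Matrix (Fin N) (Fin N) ℝ)
      = Matrix.diagonal (fun k => m k + ζ) := by
    rw [smul_one_eq_diagonal, diagonal_add]
  have hem : Matrix.diagonal mb - ζ • (1 : Matrix (Fin N) (Fin N) ℝ)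
      = Matrix.diagonal (fun k => mb k - ζ) := by
    rw [smul_one_eq_diagonal, diagonal_sub]
  have hdm' : Matrix.diagonal m - ζ • (1 : Matrix (Fin N) (Fin N) ℝ)
      = Matrix.diagonal (fun k => m k - ζ) := by
    rw [smul_one_eq_diagonal, diagonal_sub]
  have hem' : Matrix.diagonal mb + ζ • (1 : Matrix (Fin N) (Fin N) ℝ)
      = Matrix.diagonal (fun k => mb k + ζ) := by
    rw [smul_one_eq_diagonal, diagonal_add]
  have hdinv : (Matrix.diagonal (fun k => m k + ζ))⁻¹
      = Matrix.diagonal (fun k => (m k + ζ)⁻¹) := by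
    apply Matrix.inv_eq_right_inv
    rw [diagonal_mul_diagonal]
    convert Matrix.diagonal_one with k
    exact mul_inv_cancel₀ (hd k)
  have heinv : (Matrix.diagonal (fun k => mb k - ζ))⁻¹
      = Matrix.diagonal (fun k => (mb k - ζ)⁻¹) := by
    apply Matrix.inv_eq_right_inv
    rw [diagonal_mul_diagonal]
    convert Matrix.diagonal_one with k
    exact mul_inv_cancel₀ (he k)
  have hAb' : ∀ i j, m i * Ab i j - Ab i j * mb j = αb i * ab j := by
    intro i j
    have := congrFun (congrFun hAb i) j
    simpa [Matrix.sub_apply, Matrix.diagonal_mul, Matrix.mul_diagonal,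
      Matrix.vecMulVec_apply] using this
  have hcol : colBb m αb ζ = fun i => (m i + ζ)⁻¹ * αb i := by
    funext i
    simp [colBb, hdm, hdinv, Matrix.mulVec_diagonal]
  have hrow : rowB mb ab ζ = fun j => ab j * (mb j - ζ)⁻¹ := by
    funext j
    simp [rowB, hem, heinv, Matrix.vecMul_diagonal]
  have key : Hmat m ζ * Ab * Hbmat mb ζ
      = Ab + (2 * ζ) • Matrix.vecMulVec (colBb m αb ζ) (rowB mb ab ζ) := by
    unfold Hmat Hbmat
    rw [hdm, hem, hdm', hem', hdinv, heinv, diagonal_mul_diagonal, diagonal_mul_diagonal,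
      hcol, hrow]
    ext i j
    rw [Matrix.mul_diagonal, Matrix.diagonal_mul]
    simp only [Matrix.add_apply, Matrix.smul_apply, Matrix.vecMulVec_apply, smul_eq_mul]
    have h1 := hd i
    have h2 := he j
    have h3 := hAb' i j
    field_simp
    ring_nf
    linear_combination (2 * ζ) * h3
  set S : Matrix (Fin N) (Fin N) ℝ := 1 + A * Ab with hS
  set u := colBb m αb ζ with hu
  set v := rowB mb ab ζ with hv
  have hdet : IsUnit S.det := (Matrix.isUnit_iff_isUnit_det S).mp hG
  have e1 : (1 : Matrix (Fin N) (Fin N) ℝ) + A * Hmat m ζ * Ab * Hbmat mb ζ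
      = S + (2 * ζ) • (A * Matrix.replicateCol Unit u * Matrix.replicateRow Unit v) := by
    rw [Matrix.mul_assoc A, Matrix.mul_assoc A, key,
      Matrix.mul_add, Matrix.mul_smul, Matrix.vecMulVec_eq Unit, ← Matrix.mul_assoc,
      ← add_assoc, hS]
  have e2 : S * (1 + Matrix.replicateCol Unit ((2 * ζ) • ((S⁻¹ * A) *ᵥ u)) * Matrix.replicateRow Unit v)
      = S + (2 * ζ) • (A * Matrix.replicateCol Unit u * Matrix.replicateRow Unit v) := by
    rw [Matrix.replicateCol_smul, Matrix.smul_mul, Matrix.replicateCol_mulVec, Matrix.mul_add, Matrix.mul_one,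
      Matrix.mul_smul, Matrix.mul_assoc (S⁻¹ * A), Matrix.mul_assoc S⁻¹,
      Matrix.mul_nonsing_inv_cancel_left S _ hdet, ← Matrix.mul_assoc]
  rw [e1, ← e2, det_mul, Matrix.det_one_add_replicateCol_mul_replicateRow, dotProduct_smul, smul_eq_mul,
    mul_comm]
  congr 1
  simp only [Efun, ← hS, ← hu, ← hv]
  ring

end
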